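/- Let d ≥ 1 and β > d. There is a constant C = C(d, β) such that for all reals L ≥ 1 and R > 0, and all n, n' ∈ ℤ^d with |n|_∞ ≥ L + R L^{d/β}, one has Σ_{k ∈ ℤ^d, |k|_∞ ≤ L} (1+|n−k|)^{−β} (1+|n'−k|)^{−β} ≤ C R^{−β} L^{−d}. -/

import Mathlib

set_option maxHeartbeats 1000000


/-- Euclidean norm of a lattice point of `ℤ^d`. -/
noncomputable def zEucNorm {d : ℕ} (n : Fin d → ℤ) : ℝ :=
  Real.sqrt (∑ i, ((n i : ℝ)) ^ 2)

/-- ℓ∞ norm of a lattice point of `ℤ^d`. -/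
noncomputable def zSupNorm {d : ℕ} (n : Fin d → ℤ) : ℝ :=
  ((Finset.univ.sup fun i => (n i).natAbs : ℕ) : ℝ)

lemma zEucNorm_nonneg {d : ℕ} (n : Fin d → ℤ) : 0 ≤ zEucNorm n := Real.sqrt_nonneg _

lemma abs_coord_le_zEucNorm {d : ℕ} (n : Fin d → ℤ) (i : Fin d) :
    |((n i : ℝ))| ≤ zEucNorm n := by
  rw [← Real.sqrt_sq_eq_abs]
  exact Real.sqrt_le_sqrt (Finset.single_le_sum (fun j _ => sq_nonneg ((n j : ℝ)))
    (Finset.mem_univ i))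

lemma zSupNorm_le_zEucNorm {d : ℕ} (hd : 1 ≤ d) (n : Fin d → ℤ) :
    zSupNorm n ≤ zEucNorm n := by
  haveI : Nonempty (Fin d) := ⟨⟨0, hd⟩⟩
  obtain ⟨i, -, hi⟩ := Finset.exists_mem_eq_sup Finset.univ Finset.univ_nonempty
    (fun i => (n i).natAbs)
  rw [zSupNorm, hi]
  calc (((n i).natAbs : ℝ)) = |((n i : ℝ))| := by rw [Nat.cast_natAbs, Int.cast_abs]
    _ ≤ zEucNorm n := abs_coord_le_zEucNorm n i

lemma zSupNorm_triangle {d : ℕ} (hd : 1 ≤ d) (n k : Fin d → ℤ) :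
    zSupNorm n ≤ zSupNorm (n - k) + zSupNorm k := by
  haveI : Nonempty (Fin d) := ⟨⟨0, hd⟩⟩
  obtain ⟨i, -, hi⟩ := Finset.exists_mem_eq_sup Finset.univ Finset.univ_nonempty
    (fun i => (n i).natAbs)
  rw [zSupNorm, hi]
  have h1 : (n i).natAbs ≤ (n i - k i).natAbs + (k i).natAbs := by
    calc (n i).natAbs = ((n i - k i) + k i).natAbs := by ring_nf
      _ ≤ (n i - k i).natAbs + (k i).natAbs := Int.natAbs_add_le _ _
  have h2 : (n i - k i).natAbs ≤ Finset.univ.sup fun j => ((n - k) j).natAbs :=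
    Finset.le_sup (f := fun j => ((n - k) j).natAbs) (Finset.mem_univ i)
  have h3 : (k i).natAbs ≤ Finset.univ.sup fun j => (k j).natAbs :=
    Finset.le_sup (f := fun j => (k j).natAbs) (Finset.mem_univ i)
  have : (n i).natAbs ≤ (Finset.univ.sup fun j => ((n - k) j).natAbs)
      + Finset.univ.sup fun j => (k j).natAbs := by
    simp only [Pi.sub_apply] at h2 ⊢; omega
  unfold zSupNorm
  exact_mod_cast this

lemma sumInt (b : ℝ) (hb : 1 < b) :
    Summable (fun j : ℤ => ((1 : ℝ) + |(j : ℝ)|) ^ (-b)) := by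
  have hnat : Summable (fun m : ℕ => ((1 : ℝ) + m) ^ (-b)) := by
    have h0 : Summable (fun n : ℕ => (n : ℝ) ^ (-b)) :=
      Real.summable_nat_rpow.mpr (by linarith)
    have h1 : Summable fun m : ℕ => (((m + 1 : ℕ) : ℝ)) ^ (-b) :=
      h0.comp_injective (add_left_injective 1)
    refine h1.congr fun m => ?_
    push_cast
    ring_nf
  apply Summable.of_nat_of_neg
  · refine hnat.congr fun m => ?_
    simp
  · refine hnat.congr fun m => ?_
    push_cast
    simp [abs_of_nonneg]

lemma core_bound (d : ℕ) (hd : 1 ≤ d) (β : ℝ) (hβ : (d : ℝ) < β) :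
    ∃ C : ℝ, 1 ≤ C ∧ ∀ s : Finset (Fin d → ℤ),
      ∑ k ∈ s, (1 + zEucNorm k) ^ (-β) ≤ C := by
  have hd0 : (0 : ℝ) < d := by exact_mod_cast hd
  set b : ℝ := β / d with hbdef
  have hb : 1 < b := (one_lt_div hd0).mpr hβ
  have hsum := sumInt b hb
  set T : ℝ := ∑' j : ℤ, ((1 : ℝ) + |(j : ℝ)|) ^ (-b) with hT
  have hterm_nonneg : ∀ j : ℤ, 0 ≤ ((1 : ℝ) + |(j : ℝ)|) ^ (-b) := fun j =>
    Real.rpow_nonneg (by positivity) _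
  have hT1 : 1 ≤ T := by
    have := Summable.le_tsum hsum 0 (fun j _ => hterm_nonneg j)
    simpa using this
  refine ⟨T ^ d, one_le_pow₀ hT1, fun s => ?_⟩
  -- pointwise bound by a product
  have hpoint : ∀ k : Fin d → ℤ,
      (1 + zEucNorm k) ^ (-β) ≤ ∏ i, ((1 : ℝ) + |((k i : ℝ))|) ^ (-b) := by
    intro k
    have hx : (0 : ℝ) < 1 + zEucNorm k := by
      have := zEucNorm_nonneg k; linarith
    have hprod_pos : (0 : ℝ) < ∏ i, ((1 : ℝ) + |((k i : ℝ))|) :=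
      Finset.prod_pos fun i _ => by positivity
    have hprodle : ∏ i, ((1 : ℝ) + |((k i : ℝ))|) ≤ (1 + zEucNorm k) ^ d := by
      calc ∏ i, ((1 : ℝ) + |((k i : ℝ))|) ≤ ∏ _i : Fin d, (1 + zEucNorm k) :=
            Finset.prod_le_prod (fun i _ => by positivity)
              (fun i _ => by have := abs_coord_le_zEucNorm k i; linarith)
        _ = (1 + zEucNorm k) ^ d := by
            rw [Finset.prod_const, Finset.card_univ, Fintype.card_fin]
    have h1 : ((1 + zEucNorm k) ^ d : ℝ) ^ (-b) ≤
        (∏ i, ((1 : ℝ) + |((k i : ℝ))|)) ^ (-b) :=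
      Real.rpow_le_rpow_of_nonpos hprod_pos hprodle (neg_nonpos.mpr (by linarith))
    have h2 : ((1 + zEucNorm k) ^ d : ℝ) ^ (-b) = (1 + zEucNorm k) ^ (-β) := by
      rw [← Real.rpow_natCast (1 + zEucNorm k) d, ← Real.rpow_mul hx.le]
      congr 1
      field_simp [hbdef]
      rw [hbdef]; field_simp [hd0.ne']
    have h3 : (∏ i, ((1 : ℝ) + |((k i : ℝ))|)) ^ (-b) =
        ∏ i, ((1 : ℝ) + |((k i : ℝ))|) ^ (-b) :=
      (Real.finset_prod_rpow _ _ (fun i _ => by positivity) _).symm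
    rw [← h2, ← h3]
    exact h1
  set g : ℤ → ℝ := fun j => ((1 : ℝ) + |(j : ℝ)|) ^ (-b) with hg
  set t : Fin d → Finset ℤ := fun i => s.image fun k => k i with ht
  have hg_nonneg : ∀ j : ℤ, 0 ≤ g j := hterm_nonneg
  calc ∑ k ∈ s, (1 + zEucNorm k) ^ (-β)
      ≤ ∑ k ∈ s, ∏ i, g (k i) := Finset.sum_le_sum fun k _ => hpoint k
    _ ≤ ∑ k ∈ Fintype.piFinset t, ∏ i, g (k i) := by
        refine Finset.sum_le_sum_of_subset_of_nonneg ?_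
          (fun k _ _ => Finset.prod_nonneg fun i _ => hg_nonneg _)
        intro k hk
        exact Fintype.mem_piFinset.mpr fun i => Finset.mem_image_of_mem _ hk
    _ = ∏ i, ∑ j ∈ t i, g j := (Finset.prod_univ_sum t fun _ j => g j).symm
    _ ≤ ∏ _i : Fin d, T := by
        refine Finset.prod_le_prod (fun i _ => Finset.sum_nonneg fun j _ => hg_nonneg j)
          (fun i _ => Summable.sum_le_tsum _ (fun j _ => hg_nonneg j) hsum)
    _ = T ^ d := by rw [Finset.prod_const, Finset.card_univ, Fintype.card_fin]

/-- far-field covariance sum bound. For `β > d` there is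
`C = C(d, β)` such that for `L ≥ 1`, `R > 0` and `|n|_∞ ≥ L + R L^{d/β}`,
`Σ_{|k|_∞ ≤ L} (1+|n-k|)^{-β}(1+|n'-k|)^{-β} ≤ C R^{-β} L^{-d}`. -/
theorem farfield_covariance_sum_bound (d : ℕ) (hd : 1 ≤ d) (β : ℝ)
    (hβ : (d : ℝ) < β) :
    ∃ C : ℝ, 0 < C ∧ ∀ L R : ℝ, 1 ≤ L → 0 < R →
      ∀ n n' : Fin d → ℤ, L + R * L ^ ((d : ℝ) / β) ≤ zSupNorm n →
        Summable (fun k : {k : Fin d → ℤ // zSupNorm k ≤ L} =>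
          (1 + zEucNorm (n - k.1)) ^ (-β) * (1 + zEucNorm (n' - k.1)) ^ (-β)) ∧
        (∑' k : {k : Fin d → ℤ // zSupNorm k ≤ L},
          (1 + zEucNorm (n - k.1)) ^ (-β) * (1 + zEucNorm (n' - k.1)) ^ (-β)) ≤
          C * R ^ (-β) * L ^ (-(d : ℝ)) := by
  obtain ⟨C, hC1, hC⟩ := core_bound d hd β hβ
  refine ⟨C, by linarith, fun L R hL hR n n' hn => ?_⟩
  have hβ0 : (0 : ℝ) < β := lt_of_le_of_lt (by positivity) hβ
  have hL0 : (0 : ℝ) < L := by linarith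
  set D : ℝ := R * L ^ ((d : ℝ) / β) with hD
  have hD0 : 0 < D := by positivity
  -- finiteness of the index type
  haveI hfin : Finite {k : Fin d → ℤ // zSupNorm k ≤ L} := by
    have hsub : {k : Fin d → ℤ | zSupNorm k ≤ L} ⊆
        {k : Fin d → ℤ | ∀ i, k i ∈ {j : ℤ | j.natAbs ≤ ⌊L⌋₊}} := by
      intro k hk i
      have h1 : ((Finset.univ.sup fun i => (k i).natAbs : ℕ) : ℝ) ≤ L := hk
      have h2 : (Finset.univ.sup fun i => (k i).natAbs) ≤ ⌊L⌋₊ := Nat.le_floor h1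
      exact le_trans (Finset.le_sup (f := fun i => (k i).natAbs) (Finset.mem_univ i)) h2
    have hfin' : {k : Fin d → ℤ | ∀ i, k i ∈ {j : ℤ | j.natAbs ≤ ⌊L⌋₊}}.Finite := by
      refine Set.Finite.pi' fun i => ?_
      refine (Set.finite_Icc (-(⌊L⌋₊ : ℤ)) ⌊L⌋₊).subset ?_
      intro j hj
      simp only [Set.mem_setOf_eq] at hj
      simp only [Set.mem_Icc]
      omega
    exact (hfin'.subset hsub).to_subtype
  haveI : Fintype {k : Fin d → ℤ // zSupNorm k ≤ L} := Fintype.ofFinite _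
  refine ⟨Summable.of_finite, ?_⟩
  -- per-term bound for the first factor
  have hfirst : ∀ k : {k : Fin d → ℤ // zSupNorm k ≤ L},
      (1 + zEucNorm (n - k.1)) ^ (-β) ≤ R ^ (-β) * L ^ (-(d : ℝ)) := by
    intro k
    have htri := zSupNorm_triangle hd n k.1
    have hsup : D ≤ zSupNorm (n - k.1) := by
      have hkL : zSupNorm k.1 ≤ L := k.2
      linarith [hn]
    have heuc : D ≤ zEucNorm (n - k.1) := le_trans hsup (zSupNorm_le_zEucNorm hd _)
    have h1 : (1 + zEucNorm (n - k.1)) ^ (-β) ≤ D ^ (-β) := by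
      refine Real.rpow_le_rpow_of_nonpos hD0 (by linarith) (neg_nonpos.mpr hβ0.le)
    refine le_trans h1 (le_of_eq ?_)
    have hexp : (d : ℝ) / β * (-β) = -(d : ℝ) := by
      field_simp
    rw [hD, Real.mul_rpow hR.le (Real.rpow_nonneg hL0.le _),
      ← Real.rpow_mul hL0.le, hexp]
  have hrest : ∑ k : {k : Fin d → ℤ // zSupNorm k ≤ L},
      (1 + zEucNorm (n' - k.1)) ^ (-β) ≤ C := by
    set s : Finset (Fin d → ℤ) :=
      Finset.univ.image (fun k : {k : Fin d → ℤ // zSupNorm k ≤ L} => n' - k.1) with hs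
    have hinj : ∀ x ∈ (Finset.univ : Finset {k : Fin d → ℤ // zSupNorm k ≤ L}),
        ∀ y ∈ Finset.univ, n' - x.1 = n' - y.1 → x = y := by
      intro x _ y _ h
      exact Subtype.ext (by have := sub_right_injective h; exact this)
    have := Finset.sum_image (f := fun j => (1 + zEucNorm j) ^ (-β)) hinj
    rw [← hs] at this
    rw [← this]
    exact hC s
  have hterm : ∀ k : {k : Fin d → ℤ // zSupNorm k ≤ L},
      (1 + zEucNorm (n - k.1)) ^ (-β) * (1 + zEucNorm (n' - k.1)) ^ (-β) ≤
        (R ^ (-β) * L ^ (-(d : ℝ))) * (1 + zEucNorm (n' - k.1)) ^ (-β) := fun k =>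
    mul_le_mul_of_nonneg_right (hfirst k)
      (Real.rpow_nonneg (by have := zEucNorm_nonneg (n' - k.1); linarith) _)
  calc (∑' k : {k : Fin d → ℤ // zSupNorm k ≤ L},
        (1 + zEucNorm (n - k.1)) ^ (-β) * (1 + zEucNorm (n' - k.1)) ^ (-β))
      = ∑ k : {k : Fin d → ℤ // zSupNorm k ≤ L},
        (1 + zEucNorm (n - k.1)) ^ (-β) * (1 + zEucNorm (n' - k.1)) ^ (-β) := tsum_fintype _
    _ ≤ ∑ k : {k : Fin d → ℤ // zSupNorm k ≤ L},
        (R ^ (-β) * L ^ (-(d : ℝ))) * (1 + zEucNorm (n' - k.1)) ^ (-β) :=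
        Finset.sum_le_sum fun k _ => hterm k
    _ = (R ^ (-β) * L ^ (-(d : ℝ))) *
        ∑ k : {k : Fin d → ℤ // zSupNorm k ≤ L}, (1 + zEucNorm (n' - k.1)) ^ (-β) :=
        (Finset.mul_sum _ _ _).symm
    _ ≤ (R ^ (-β) * L ^ (-(d : ℝ))) * C := by
        exact mul_le_mul_of_nonneg_left hrest
          (mul_nonneg (Real.rpow_nonneg hR.le _) (Real.rpow_nonneg hL0.le _))
    _ = C * R ^ (-β) * L ^ (-(d : ℝ)) := by ring
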